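/- Let Z ~ HRPar_{1_d}(Q,l) with exponent α > 0. Then R = ‖Z‖_∞ and Θ = Z/‖Z‖_∞ are independent, and R is Pareto(α)-distributed: P(R > r) = r^{-α} for r ≥ 1. -/

import Mathlib

open MeasureTheory Matrix

/-- Unnormalized Hüsler-Reiss Pareto density on `{z > 0 : z ≰ a}`. -/
noncomputable def hrDens {d : ℕ} (Q : Matrix (Fin d) (Fin d) ℝ) (l a : Fin d → ℝ)
    (z : Fin d → ℝ) : ℝ :=
  if (∀ i, 0 < z i) ∧ ¬ ∀ i, z i ≤ a i then
    Real.exp (-(1 / 2) *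
        ((fun i => Real.log (z i)) ⬝ᵥ Q.mulVec fun i => Real.log (z i)) +
        l ⬝ᵥ fun i => Real.log (z i)) * ∏ i, (z i)⁻¹
  else 0

/-- Hüsler-Reiss Pareto normalizing constant `C_a(Q,l)`. -/
noncomputable def hrC {d : ℕ} (Q : Matrix (Fin d) (Fin d) ℝ) (l a : Fin d → ℝ) : ℝ :=
  ∫ z, hrDens Q l a z

lemma hrDens_nonneg {d : ℕ} (Q : Matrix (Fin d) (Fin d) ℝ) (l a z : Fin d → ℝ) :
    0 ≤ hrDens Q l a z := by
  unfold hrDens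
  split
  · rename_i h
    exact mul_nonneg (Real.exp_nonneg _)
      (Finset.prod_nonneg fun i _ => inv_nonneg.2 (h.1 i).le)
  · exact le_refl 0

lemma measurable_hrDens {d : ℕ} (Q : Matrix (Fin d) (Fin d) ℝ) (l a : Fin d → ℝ) :
    Measurable (hrDens Q l a) := by
  unfold hrDens
  have hlog : ∀ i : Fin d, Measurable fun z : Fin d → ℝ => Real.log (z i) :=
    fun i => Real.measurable_log.comp (measurable_pi_apply i)
  apply Measurable.ite
  · have h1 : MeasurableSet {z : Fin d → ℝ | ∀ i, 0 < z i} := by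
      rw [Set.setOf_forall]
      exact MeasurableSet.iInter fun i => measurableSet_lt measurable_const (measurable_pi_apply i)
    have h2 : MeasurableSet {z : Fin d → ℝ | ∀ i, z i ≤ a i} := by
      rw [Set.setOf_forall]
      exact MeasurableSet.iInter fun i => measurableSet_le (measurable_pi_apply i) measurable_const
    exact h1.inter h2.compl
  · apply Measurable.mul
    · apply Real.measurable_exp.comp
      apply Measurable.add
      · apply Measurable.const_mul
        simp only [dotProduct, Matrix.mulVec]
        exact Finset.measurable_sum _ fun i _ => (hlog i).mul
          (Finset.measurable_sum _ fun j _ => (hlog j).const_mul _)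
      · simp only [dotProduct]
        exact Finset.measurable_sum _ fun i _ => (hlog i).const_mul _
    · exact Finset.measurable_prod _ fun i _ => (measurable_pi_apply i).inv
  · exact measurable_const

lemma hrDens_smul {d : ℕ} {Q : Matrix (Fin d) (Fin d) ℝ} {l : Fin d → ℝ}
    (hsym : Qᵀ = Q) (hQ1 : Q.mulVec (fun _ => 1) = 0)
    {r : ℝ} (hr : 1 ≤ r) {z : Fin d → ℝ} (hz : 1 < ‖z‖) :
    hrDens Q l (fun _ => 1) (r • z) = r ^ (∑ i, l i) * ((r ^ d)⁻¹ * hrDens Q l (fun _ => 1) z) := by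
  have hr0 : (0:ℝ) < r := lt_of_lt_of_le one_pos hr
  by_cases hpos : ∀ i, 0 < z i
  · obtain ⟨i0, hi0⟩ : ∃ i, 1 < z i := by
      by_contra hcon
      push_neg at hcon
      have : ‖z‖ ≤ 1 := (pi_norm_le_iff_of_nonneg zero_le_one).2 fun i => by
        rw [Real.norm_eq_abs, abs_of_pos (hpos i)]; exact hcon i
      linarith
    have hc1 : (∀ i, 0 < z i) ∧ ¬ ∀ i, z i ≤ (fun _ => (1:ℝ)) i :=
      ⟨hpos, fun h => absurd (h i0) (not_le.2 hi0)⟩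
    have hc2 : (∀ i, 0 < (r • z) i) ∧ ¬ ∀ i, (r • z) i ≤ (fun _ => (1:ℝ)) i := by
      constructor
      · intro i; exact mul_pos hr0 (hpos i)
      · intro h
        have := h i0
        simp only [Pi.smul_apply, smul_eq_mul] at this
        nlinarith [hpos i0]
    rw [hrDens, hrDens, if_pos hc1, if_pos hc2]
    set x : Fin d → ℝ := fun i => Real.log (z i) with hx
    have hlogsmul : (fun i => Real.log ((r • z) i)) = Real.log r • (fun _ => (1:ℝ)) + x := by
      funext i
      simp only [Pi.smul_apply, Pi.add_apply, smul_eq_mul, mul_one]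
      rw [Real.log_mul (ne_of_gt hr0) (ne_of_gt (hpos i))]
    rw [hlogsmul]
    have hmv : Q.mulVec (Real.log r • (fun _ => (1:ℝ)) + x) = Q.mulVec x := by
      rw [Matrix.mulVec_add, Matrix.mulVec_smul, hQ1, smul_zero, zero_add]
    have hvm : (fun _ => (1:ℝ)) ⬝ᵥ Q.mulVec x = 0 := by
      rw [Matrix.dotProduct_mulVec, ← hsym, Matrix.vecMul_transpose, hQ1, zero_dotProduct]
    have hquad : (Real.log r • (fun _ => (1:ℝ)) + x) ⬝ᵥ Q.mulVec (Real.log r • (fun _ => (1:ℝ)) + x)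
        = x ⬝ᵥ Q.mulVec x := by
      rw [hmv, add_dotProduct, smul_dotProduct, hvm, smul_zero, zero_add]
    have hlin : l ⬝ᵥ (Real.log r • (fun _ => (1:ℝ)) + x)
        = Real.log r * (∑ i, l i) + l ⬝ᵥ x := by
      rw [dotProduct_add, dotProduct_smul]
      simp [dotProduct, mul_comm, Finset.mul_sum]
    have hprod : ∏ i, ((r • z) i)⁻¹ = (r ^ d)⁻¹ * ∏ i, (z i)⁻¹ := by
      simp only [Pi.smul_apply, smul_eq_mul, mul_inv]
      rw [Finset.prod_mul_distrib, Finset.prod_const, Finset.card_univ, Fintype.card_fin,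
        ← inv_pow]
    rw [hquad, hlin, hprod]
    have hrpow : r ^ (∑ i, l i) = Real.exp (Real.log r * ∑ i, l i) := by
      rw [Real.rpow_def_of_pos hr0]
    rw [hrpow, show -(1 / 2) * (x ⬝ᵥ Q.mulVec x) + (Real.log r * (∑ i, l i) + l ⬝ᵥ x)
      = Real.log r * (∑ i, l i) + (-(1 / 2) * (x ⬝ᵥ Q.mulVec x) + l ⬝ᵥ x) by ring, Real.exp_add]
    ring
  · have h1 : hrDens Q l (fun _ => 1) z = 0 := by
      rw [hrDens, if_neg]; intro h; exact hpos h.1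
    have h2 : hrDens Q l (fun _ => 1) (r • z) = 0 := by
      rw [hrDens, if_neg]
      intro h
      apply hpos
      intro i
      have := h.1 i
      simp only [Pi.smul_apply, smul_eq_mul] at this
      nlinarith
    rw [h1, h2, mul_zero, mul_zero]

/-- The Hüsler-Reiss Pareto measure. -/
noncomputable def hrMeas {d : ℕ} (Q : Matrix (Fin d) (Fin d) ℝ) (l : Fin d → ℝ) :
    Measure (Fin d → ℝ) :=
  volume.withDensity fun z =>
    ENNReal.ofReal ((hrC Q l fun _ => 1)⁻¹ * hrDens Q l (fun _ => 1) z)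

lemma measurable_hrTheta {d : ℕ} : Measurable (fun z : Fin d → ℝ => ‖z‖⁻¹ • z) :=
  measurable_norm.inv.smul measurable_id

lemma measurableSet_hrE {d : ℕ} (r : ℝ) {T : Set (Fin d → ℝ)} (hT : MeasurableSet T) :
    MeasurableSet {z : Fin d → ℝ | r < ‖z‖ ∧ ‖z‖⁻¹ • z ∈ T} :=
  (measurableSet_lt measurable_const measurable_norm).inter (measurable_hrTheta hT)

lemma hrMeas_apply {d : ℕ} (Q : Matrix (Fin d) (Fin d) ℝ) (l : Fin d → ℝ)
    {s : Set (Fin d → ℝ)} (hs : MeasurableSet s) :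
    hrMeas Q l s = ∫⁻ z in s,
      ENNReal.ofReal ((hrC Q l fun _ => 1)⁻¹ * hrDens Q l (fun _ => 1) z) := by
  rw [hrMeas, withDensity_apply _ hs]

lemma hrMeas_null {d : ℕ} (Q : Matrix (Fin d) (Fin d) ℝ) (l : Fin d → ℝ) :
    hrMeas Q l {z : Fin d → ℝ | ¬ 1 < ‖z‖} = 0 := by
  have hms : MeasurableSet {z : Fin d → ℝ | ¬ 1 < ‖z‖} :=
    (measurableSet_lt measurable_const measurable_norm).compl
  rw [hrMeas_apply Q l hms]
  rw [setLIntegral_congr_fun hms (fun z hz => ?_), lintegral_zero]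
  have h0 : hrDens Q l (fun _ => 1) z = 0 := by
    rw [hrDens, if_neg]
    rintro ⟨h1, h2⟩
    apply h2
    intro i
    have := (abs_le.1 ((norm_le_pi_norm z i).trans (not_lt.1 hz))).2
    simpa using this
  simp [h0]

lemma hrMeas_scale {d : ℕ} {Q : Matrix (Fin d) (Fin d) ℝ} {l : Fin d → ℝ}
    (hsym : Qᵀ = Q) (hQ1 : Q.mulVec (fun _ => 1) = 0)
    {T : Set (Fin d → ℝ)} (hT : MeasurableSet T) {r : ℝ} (hr : 1 ≤ r) :
    hrMeas Q l {z : Fin d → ℝ | r < ‖z‖ ∧ ‖z‖⁻¹ • z ∈ T}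
      = ENNReal.ofReal (r ^ (∑ i, l i)) *
        hrMeas Q l {z : Fin d → ℝ | 1 < ‖z‖ ∧ ‖z‖⁻¹ • z ∈ T} := by
  have hr0 : (0:ℝ) < r := lt_of_lt_of_le one_pos hr
  have hrd0 : (0:ℝ) < r ^ d := pow_pos hr0 d
  have hc0 : 0 ≤ (hrC Q l fun _ => 1)⁻¹ :=
    inv_nonneg.2 (integral_nonneg fun z => hrDens_nonneg Q l _ z)
  set f : (Fin d → ℝ) → ENNReal := fun z =>
    ENNReal.ofReal ((hrC Q l fun _ => 1)⁻¹ * hrDens Q l (fun _ => 1) z) with hfdef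
  have hfm : Measurable f :=
    ENNReal.measurable_ofReal.comp ((measurable_hrDens Q l _).const_mul _)
  have hnorm_smul : ∀ w : Fin d → ℝ, ‖r • w‖ = r * ‖w‖ := by
    intro w
    rw [norm_smul, Real.norm_eq_abs, abs_of_pos hr0]
  have hΘeq : ∀ w : Fin d → ℝ, ‖r • w‖⁻¹ • (r • w) = ‖w‖⁻¹ • w := by
    intro w
    rw [hnorm_smul w, smul_smul]
    congr 1
    rcases eq_or_ne ‖w‖ 0 with h | h
    · simp [h]
    · field_simp
  set g : (Fin d → ℝ) → ENNReal :=
    ({z : Fin d → ℝ | r < ‖z‖ ∧ ‖z‖⁻¹ • z ∈ T}).indicator f with hgdef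
  have hgm : Measurable g := hfm.indicator (measurableSet_hrE r hT)
  have hkey : ∀ w : Fin d → ℝ, g (r • w)
      = ENNReal.ofReal (r ^ (∑ i, l i) * (r ^ d)⁻¹) *
        ({z : Fin d → ℝ | 1 < ‖z‖ ∧ ‖z‖⁻¹ • z ∈ T}).indicator f w := by
    intro w
    have hmem : r • w ∈ {z : Fin d → ℝ | r < ‖z‖ ∧ ‖z‖⁻¹ • z ∈ T}
        ↔ w ∈ {z : Fin d → ℝ | 1 < ‖z‖ ∧ ‖z‖⁻¹ • z ∈ T} := by
      simp only [Set.mem_setOf_eq]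
      rw [hΘeq w, hnorm_smul w]
      constructor
      · rintro ⟨h1, h2⟩; exact ⟨by nlinarith, h2⟩
      · rintro ⟨h1, h2⟩; exact ⟨by nlinarith, h2⟩
    by_cases hw : w ∈ {z : Fin d → ℝ | 1 < ‖z‖ ∧ ‖z‖⁻¹ • z ∈ T}
    · rw [hgdef, Set.indicator_of_mem (hmem.2 hw), Set.indicator_of_mem hw, hfdef]
      simp only
      rw [hrDens_smul hsym hQ1 hr hw.1, ← ENNReal.ofReal_mul (by positivity)]
      congr 1
      ring
    · rw [hgdef, Set.indicator_of_notMem (fun h => hw (hmem.1 h)),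
        Set.indicator_of_notMem hw, mul_zero]
  have hmap : Measure.map (fun w : Fin d → ℝ => r • w) (volume : Measure (Fin d → ℝ))
      = ENNReal.ofReal |(r ^ d)⁻¹| • (volume : Measure (Fin d → ℝ)) := by
    have := Measure.map_addHaar_smul (volume : Measure (Fin d → ℝ)) (ne_of_gt hr0)
    simpa [Module.finrank_fintype_fun_eq_card] using this
  have hcv : ∫⁻ w, g (r • w) = ENNReal.ofReal |(r ^ d)⁻¹| * ∫⁻ z, g z := by
    rw [← lintegral_map hgm (measurable_const_smul r), hmap, lintegral_smul_measure, smul_eq_mul]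
  have hgint : ∫⁻ z, g z ∂(volume : Measure (Fin d → ℝ))
      = hrMeas Q l {z : Fin d → ℝ | r < ‖z‖ ∧ ‖z‖⁻¹ • z ∈ T} := by
    rw [hgdef, lintegral_indicator (measurableSet_hrE r hT),
      hrMeas_apply Q l (measurableSet_hrE r hT)]
  have hgint2 : ∫⁻ w, g (r • w) ∂(volume : Measure (Fin d → ℝ))
      = ENNReal.ofReal (r ^ (∑ i, l i) * (r ^ d)⁻¹) *
        hrMeas Q l {z : Fin d → ℝ | 1 < ‖z‖ ∧ ‖z‖⁻¹ • z ∈ T} := by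
    simp only [hkey]
    rw [lintegral_const_mul _ (hfm.indicator (measurableSet_hrE 1 hT)),
      lintegral_indicator (measurableSet_hrE 1 hT), hrMeas_apply Q l (measurableSet_hrE 1 hT)]
  have habs : ENNReal.ofReal |(r ^ d)⁻¹| = ENNReal.ofReal ((r ^ d)⁻¹) := by
    rw [abs_of_pos (inv_pos.2 hrd0)]
  rw [hgint2, habs, hgint] at hcv
  have hcancel : ENNReal.ofReal (r ^ d) * ENNReal.ofReal ((r ^ d)⁻¹) = 1 := by
    rw [← ENNReal.ofReal_mul hrd0.le, mul_inv_cancel₀ (ne_of_gt hrd0), ENNReal.ofReal_one]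
  calc hrMeas Q l {z : Fin d → ℝ | r < ‖z‖ ∧ ‖z‖⁻¹ • z ∈ T}
      = ENNReal.ofReal (r ^ d) * (ENNReal.ofReal ((r ^ d)⁻¹) *
          hrMeas Q l {z : Fin d → ℝ | r < ‖z‖ ∧ ‖z‖⁻¹ • z ∈ T}) := by
        rw [← mul_assoc, hcancel, one_mul]
    _ = ENNReal.ofReal (r ^ d) * (ENNReal.ofReal (r ^ (∑ i, l i) * (r ^ d)⁻¹) *
          hrMeas Q l {z : Fin d → ℝ | 1 < ‖z‖ ∧ ‖z‖⁻¹ • z ∈ T}) := by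
        rw [← hcv]
    _ = ENNReal.ofReal (r ^ (∑ i, l i)) *
          hrMeas Q l {z : Fin d → ℝ | 1 < ‖z‖ ∧ ‖z‖⁻¹ • z ∈ T} := by
        rw [← mul_assoc, ← ENNReal.ofReal_mul hrd0.le]
        congr 2
        rw [show r ^ d * (r ^ (∑ i, l i) * (r ^ d)⁻¹)
          = r ^ (∑ i, l i) * (r ^ d * (r ^ d)⁻¹) by ring,
          mul_inv_cancel₀ (ne_of_gt hrd0), mul_one]

lemma hrMeas_full {d : ℕ} (Q : Matrix (Fin d) (Fin d) ℝ) (l : Fin d → ℝ)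
    (T : Set (Fin d → ℝ)) :
    hrMeas Q l {z : Fin d → ℝ | 1 < ‖z‖ ∧ ‖z‖⁻¹ • z ∈ T}
      = hrMeas Q l {z : Fin d → ℝ | ‖z‖⁻¹ • z ∈ T} := by
  have hsub : {z : Fin d → ℝ | 1 < ‖z‖ ∧ ‖z‖⁻¹ • z ∈ T} ⊆ {z | ‖z‖⁻¹ • z ∈ T} :=
    fun z hz => hz.2
  have hdiff : hrMeas Q l ({z : Fin d → ℝ | ‖z‖⁻¹ • z ∈ T}
      \ {z | 1 < ‖z‖ ∧ ‖z‖⁻¹ • z ∈ T}) = 0 := by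
    apply measure_mono_null _ (hrMeas_null Q l)
    intro z hz h1
    exact hz.2 ⟨h1, hz.1⟩
  rw [show {z : Fin d → ℝ | ‖z‖⁻¹ • z ∈ T}
      = {z : Fin d → ℝ | 1 < ‖z‖ ∧ ‖z‖⁻¹ • z ∈ T} ∪
        ({z : Fin d → ℝ | ‖z‖⁻¹ • z ∈ T} \ {z | 1 < ‖z‖ ∧ ‖z‖⁻¹ • z ∈ T}) from
    (Set.union_diff_cancel hsub).symm]
  exact (le_antisymm ((measure_union_le _ _).trans (by rw [hdiff, add_zero]))
    (measure_mono Set.subset_union_left)).symm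


/-- Polar decomposition of a Hüsler-Reiss Pareto vector with threshold `1_d`:
`R = ‖Z‖_∞` and `Θ = Z/‖Z‖_∞` are independent, and `R` is Pareto(α):
`P(R > r) = r^{-α}` for `r ≥ 1`, where `α = -lᵀ1_d`. (On `Fin d → ℝ` the norm
`‖·‖` is the max-norm.) -/
theorem hr_pareto_polar_decomposition
    {Ω : Type*} [MeasurableSpace Ω] (μ : Measure Ω) [IsProbabilityMeasure μ]
    {d : ℕ} (hd : 2 ≤ d)
    (Q : Matrix (Fin d) (Fin d) ℝ) (l : Fin d → ℝ)
    (hQ : Q.PosSemidef)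
    (hker : ∀ v : Fin d → ℝ, Q.mulVec v = 0 ↔ ∃ c : ℝ, v = fun _ => c)
    (hl : ∑ i, l i < 0)
    (Z : Ω → Fin d → ℝ) (hZ : Measurable Z)
    (hdist : Measure.map Z μ = volume.withDensity fun z =>
      ENNReal.ofReal ((hrC Q l fun _ => 1)⁻¹ * hrDens Q l (fun _ => 1) z)) :
    ProbabilityTheory.IndepFun (fun ω => ‖Z ω‖) (fun ω => ‖Z ω‖⁻¹ • Z ω) μ ∧
      ∀ r : ℝ, 1 ≤ r → μ {ω | r < ‖Z ω‖} = ENNReal.ofReal (r ^ (∑ i, l i)) := by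
  classical
  have hsym : Qᵀ = Q := hQ.1
  have hQ1 : Q.mulVec (fun _ => (1:ℝ)) = 0 := (hker fun _ => 1).2 ⟨1, rfl⟩
  have hdist' : Measure.map Z μ = hrMeas Q l := hdist
  have hpre : ∀ s : Set (Fin d → ℝ), MeasurableSet s → μ (Z ⁻¹' s) = hrMeas Q l s := by
    intro s hs
    rw [← Measure.map_apply hZ hs, hdist']
  have huniv : hrMeas Q l Set.univ = 1 := by
    rw [← hpre Set.univ MeasurableSet.univ, Set.preimage_univ, measure_univ]
  have hΘuniv : {z : Fin d → ℝ | ‖z‖⁻¹ • z ∈ Set.univ} = Set.univ := by simp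
  -- Pareto tail
  have pareto : ∀ r : ℝ, 1 ≤ r →
      μ {ω | r < ‖Z ω‖} = ENNReal.ofReal (r ^ (∑ i, l i)) := by
    intro r hr
    have h1 : {ω | r < ‖Z ω‖} = Z ⁻¹' {z : Fin d → ℝ | r < ‖z‖ ∧ ‖z‖⁻¹ • z ∈ Set.univ} := by
      ext ω; simp
    rw [h1, hpre _ (measurableSet_hrE r MeasurableSet.univ),
      hrMeas_scale hsym hQ1 MeasurableSet.univ hr, hrMeas_full, hΘuniv, huniv, mul_one]
  refine ⟨?_, pareto⟩
  -- independence
  rw [ProbabilityTheory.IndepFun_iff_Indep]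
  have hR : Measurable fun ω => ‖Z ω‖ := hZ.norm
  have hΘZ : Measurable fun ω => ‖Z ω‖⁻¹ • Z ω := hZ.norm.inv.smul hZ
  refine ProbabilityTheory.IndepSets.indep hR.comap_le hΘZ.comap_le
    (isPiSystem_Ioi.comap (fun ω => ‖Z ω‖))
    (MeasurableSpace.isPiSystem_measurableSet.comap (fun ω => ‖Z ω‖⁻¹ • Z ω)) ?_ ?_ ?_
  · rw [BorelSpace.measurable_eq (α := ℝ), borel_eq_generateFrom_Ioi,
      MeasurableSpace.comap_generateFrom]
    rfl
  · conv_lhs => rw [← MeasurableSpace.generateFrom_measurableSet (α := Fin d → ℝ)]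
    rw [MeasurableSpace.comap_generateFrom]
    rfl
  · rw [ProbabilityTheory.IndepSets_iff]
    rintro s t ⟨S, ⟨a, rfl⟩, rfl⟩ ⟨T, hT, rfl⟩
    have hSm : MeasurableSet {z : Fin d → ℝ | a < ‖z‖} :=
      measurableSet_lt measurable_const measurable_norm
    have hTm : MeasurableSet {z : Fin d → ℝ | ‖z‖⁻¹ • z ∈ T} := measurable_hrTheta hT
    have hs' : (fun ω => ‖Z ω‖) ⁻¹' Set.Ioi a = Z ⁻¹' {z : Fin d → ℝ | a < ‖z‖} := rfl
    have ht' : (fun ω => ‖Z ω‖⁻¹ • Z ω) ⁻¹' T = Z ⁻¹' {z : Fin d → ℝ | ‖z‖⁻¹ • z ∈ T} := rfl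
    have hinter : (fun ω => ‖Z ω‖) ⁻¹' Set.Ioi a ∩ (fun ω => ‖Z ω‖⁻¹ • Z ω) ⁻¹' T
        = Z ⁻¹' {z : Fin d → ℝ | a < ‖z‖ ∧ ‖z‖⁻¹ • z ∈ T} := by
      rw [hs', ht', ← Set.preimage_inter]
      rfl
    by_cases ha : 1 ≤ a
    · have hSuniv : {z : Fin d → ℝ | a < ‖z‖} = {z : Fin d → ℝ | a < ‖z‖ ∧ ‖z‖⁻¹ • z ∈ Set.univ} := by
        ext z; simp
      rw [hinter, hpre _ (measurableSet_hrE a hT), hrMeas_scale hsym hQ1 hT ha, hrMeas_full,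
        hs', hpre _ hSm, ht', hpre _ hTm, hSuniv,
        hrMeas_scale hsym hQ1 MeasurableSet.univ ha, hrMeas_full, hΘuniv, huniv, mul_one]
    · push_neg at ha
      have hcompl : hrMeas Q l {z : Fin d → ℝ | a < ‖z‖}ᶜ = 0 := by
        apply measure_mono_null _ (hrMeas_null Q l)
        intro z hz
        simp only [Set.mem_compl_iff, Set.mem_setOf_eq, not_lt] at hz ⊢
        linarith
      have hνS : hrMeas Q l {z : Fin d → ℝ | a < ‖z‖} = 1 := by
        have h := measure_add_measure_compl (μ := hrMeas Q l) hSm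
        rw [hcompl, add_zero, huniv] at h
        exact h
      have hd0 : hrMeas Q l ({z : Fin d → ℝ | ‖z‖⁻¹ • z ∈ T}
          \ {z | a < ‖z‖ ∧ ‖z‖⁻¹ • z ∈ T}) = 0 := by
        apply measure_mono_null _ hcompl
        intro z hz h1
        exact hz.2 ⟨h1, hz.1⟩
      have hνinter : hrMeas Q l {z : Fin d → ℝ | a < ‖z‖ ∧ ‖z‖⁻¹ • z ∈ T}
          = hrMeas Q l {z : Fin d → ℝ | ‖z‖⁻¹ • z ∈ T} := by
        rw [show {z : Fin d → ℝ | ‖z‖⁻¹ • z ∈ T}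
            = {z : Fin d → ℝ | a < ‖z‖ ∧ ‖z‖⁻¹ • z ∈ T} ∪
              ({z : Fin d → ℝ | ‖z‖⁻¹ • z ∈ T} \ {z | a < ‖z‖ ∧ ‖z‖⁻¹ • z ∈ T}) from
          (Set.union_diff_cancel (fun z hz => hz.2)).symm]
        exact (le_antisymm ((measure_union_le _ _).trans (by rw [hd0, add_zero]))
          (measure_mono Set.subset_union_left)).symm
      rw [hinter, hpre _ (measurableSet_hrE a hT), hνinter, hs', hpre _ hSm, hνS,
        ht', hpre _ hTm, one_mul]
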